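/- arXiv:2602.20737 — 3 statements merged into one kernel-verified Lean document; each statement's English description precedes it below -/
import Mathlib

section
/- Let R be a complete Noetherian local ring with maximal ideal m and residue field F of odd characteristic p, and let A be a 2×2 matrix over R whose reduction modulo m is the identity matrix. Then A has a square root B in M_2(R) (i.e., B² = A) such that det(B) reduces to 1 in F. -/
open IsLocalRing Polynomial

lemma exists_sqrt_res {R : Type*} [CommRing R] [IsLocalRing R]
    [IsAdicComplete (maximalIdeal R) R]
    (a r₀ : R) (h : residue R a = (residue R r₀) ^ 2)
    (h2 : residue R (2 * r₀) ≠ 0) :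
    ∃ r : R, r * r = a ∧ residue R r = residue R r₀ := by
  have hmonic : (X ^ 2 - C a : R[X]).Monic := monic_X_pow_sub_C a (by norm_num)
  have heval : (X ^ 2 - C a : R[X]).eval r₀ ∈ maximalIdeal R := by
    have he : (X ^ 2 - C a : R[X]).eval r₀ = r₀ ^ 2 - a := by simp
    rw [he]
    have h0 : residue R (r₀ ^ 2 - a) = 0 := by rw [map_sub, map_pow, h, sub_self]
    exact Ideal.Quotient.eq_zero_iff_mem.mp h0
  have hderiv : IsUnit (Ideal.Quotient.mk (maximalIdeal R)
      ((X ^ 2 - C a : R[X]).derivative.eval r₀)) := by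
    have hd : (X ^ 2 - C a : R[X]).derivative.eval r₀ = 2 * r₀ := by
      simp [derivative_X_pow]
      ring
    rw [hd]
    exact isUnit_iff_ne_zero.mpr h2
  obtain ⟨r, hr, hr₀⟩ := HenselianRing.is_henselian (I := maximalIdeal R)
    (X ^ 2 - C a) hmonic r₀ heval hderiv
  refine ⟨r, ?_, ?_⟩
  · have h1 : r ^ 2 - a = 0 := by simpa using hr
    linear_combination h1
  · have h0 : residue R (r - r₀) = 0 := Ideal.Quotient.eq_zero_iff_mem.mpr hr₀
    rw [map_sub, sub_eq_zero] at h0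
    exact h0

/-- Over a complete Noetherian local ring `R` with residue field of odd
characteristic `p`, any `2 × 2` matrix `A` that is residually the identity has a square root
`B` whose determinant reduces to `1` in the residue field. -/
theorem matrix_sqrt_of_residually_identity
    (p : ℕ) [Fact p.Prime] (hp : Odd p)
    (R : Type*) [CommRing R] [IsLocalRing R] [IsNoetherianRing R]
    [IsAdicComplete (maximalIdeal R) R]
    [CharP (ResidueField R) p]
    (A : Matrix (Fin 2) (Fin 2) R)
    (hA : A.map (residue R) = 1) :
    ∃ B : Matrix (Fin 2) (Fin 2) R, B * B = A ∧ residue R B.det = 1 := by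
  have hpprime : p.Prime := Fact.out
  have hpd : ¬ (p ∣ 2) := by
    intro hd
    have hpeq : p = 2 := (Nat.prime_dvd_prime_iff_eq hpprime Nat.prime_two).mp hd
    rw [hpeq] at hp
    simp [Nat.odd_iff] at hp
  have hp2 : (2 : ResidueField R) ≠ 0 := by
    intro h
    apply hpd
    rwa [show (2 : ResidueField R) = ((2 : ℕ) : ResidueField R) by norm_num,
      CharP.cast_eq_zero_iff (ResidueField R) p] at h
  have hr2 : residue R (2 : R) = 2 := map_ofNat _ 2
  -- residues of entries
  have hres : ∀ i j, residue R (A i j) = (1 : Matrix (Fin 2) (Fin 2) (ResidueField R)) i j := by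
    intro i j
    have : (A.map (residue R)) i j = (1 : Matrix (Fin 2) (Fin 2) (ResidueField R)) i j := by
      rw [hA]
    simpa [Matrix.map_apply] using this
  have h00 : residue R (A 0 0) = 1 := by simpa [Matrix.one_apply] using hres 0 0
  have h11 : residue R (A 1 1) = 1 := by simpa [Matrix.one_apply] using hres 1 1
  have h01 : residue R (A 0 1) = 0 := by simpa [Matrix.one_apply] using hres 0 1
  have h10 : residue R (A 1 0) = 0 := by simpa [Matrix.one_apply] using hres 1 0
  -- square root of the determinant
  have hdet : residue R A.det = (residue R 1) ^ 2 := by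
    rw [Matrix.det_fin_two]
    simp [h00, h11, h01, h10]
  obtain ⟨s, hs, hs1⟩ := exists_sqrt_res A.det 1
    hdet (by rw [mul_one, hr2]; exact hp2)
  rw [map_one] at hs1
  -- square root of trace + 2s
  have htr : residue R (A.trace + 2 * s) = (residue R 2) ^ 2 := by
    rw [Matrix.trace_fin_two, map_add, map_add, map_mul, h00, h11, hs1, hr2]
    ring
  obtain ⟨u, hu, hu2⟩ := exists_sqrt_res (A.trace + 2 * s) 2 htr
    (by rw [map_mul, hr2]; exact mul_ne_zero hp2 hp2)
  have hu2' : residue R u = 2 := by rwa [hr2] at hu2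
  -- u is a unit
  have huu : IsUnit u := by
    by_contra hnu
    have hm : u ∈ maximalIdeal R := hnu
    have h0 : residue R u = 0 := Ideal.Quotient.eq_zero_iff_mem.mpr hm
    exact hp2 (hu2'.symm.trans h0)
  obtain ⟨v, hv⟩ := huu
  set w : R := (↑v⁻¹ : R) with hw
  have hwu : w * u = 1 := by rw [hw, ← hv]; exact v.inv_mul
  refine ⟨w • (A + s • (1 : Matrix (Fin 2) (Fin 2) R)), ?_, ?_⟩
  · -- key matrix identity
    have hdet2 : s * s = A 0 0 * A 1 1 - A 0 1 * A 1 0 := by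
      rw [hs, Matrix.det_fin_two]
    have key : (A + s • (1 : Matrix (Fin 2) (Fin 2) R)) * (A + s • 1) = (u * u) • A := by
      rw [hu]
      have e00 : ((A + s • (1 : Matrix (Fin 2) (Fin 2) R)) * (A + s • 1)) 0 0
          = ((A.trace + 2 * s) • A) 0 0 := by
        simp [Matrix.mul_apply, Fin.sum_univ_two, Matrix.one_apply, Matrix.trace_fin_two,
          Matrix.smul_apply, Matrix.add_apply]
        linear_combination hdet2
      have e01 : ((A + s • (1 : Matrix (Fin 2) (Fin 2) R)) * (A + s • 1)) 0 1
          = ((A.trace + 2 * s) • A) 0 1 := by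
        simp [Matrix.mul_apply, Fin.sum_univ_two, Matrix.one_apply, Matrix.trace_fin_two,
          Matrix.smul_apply, Matrix.add_apply]
        ring
      have e10 : ((A + s • (1 : Matrix (Fin 2) (Fin 2) R)) * (A + s • 1)) 1 0
          = ((A.trace + 2 * s) • A) 1 0 := by
        simp [Matrix.mul_apply, Fin.sum_univ_two, Matrix.one_apply, Matrix.trace_fin_two,
          Matrix.smul_apply, Matrix.add_apply]
        ring
      have e11 : ((A + s • (1 : Matrix (Fin 2) (Fin 2) R)) * (A + s • 1)) 1 1
          = ((A.trace + 2 * s) • A) 1 1 := by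
        simp [Matrix.mul_apply, Fin.sum_univ_two, Matrix.one_apply, Matrix.trace_fin_two,
          Matrix.smul_apply, Matrix.add_apply]
        linear_combination hdet2
      ext i j
      fin_cases i <;> fin_cases j
      · exact e00
      · exact e01
      · exact e10
      · exact e11
    rw [Matrix.smul_mul, Matrix.mul_smul, key, smul_smul, smul_smul]
    have h1 : w * w * (u * u) = 1 := by
      have h2 : w * w * (u * u) = (w * u) * (w * u) := by ring
      rw [h2, hwu, one_mul]
    rw [h1, one_smul]
  · rw [Matrix.det_smul]
    have hdet3 : (A + s • (1 : Matrix (Fin 2) (Fin 2) R)).det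
        = (A 0 0 + s) * (A 1 1 + s) - A 0 1 * A 1 0 := by
      rw [Matrix.det_fin_two]
      simp [Matrix.smul_apply, Matrix.add_apply, Matrix.one_apply]
    rw [hdet3]
    have hw2 : residue R w * 2 = 1 := by
      have h3 := congrArg (residue R) hwu
      rw [map_mul, hu2', map_one] at h3
      exact h3
    rw [map_mul, map_pow, map_sub, map_mul, map_mul, map_add, map_add]
    rw [h00, h11, h01, h10, hs1]
    simp only [Fintype.card_fin]
    norm_num
    linear_combination (residue R w * 2 + 1) * hw2
end

section
/- Let F be a field of characteristic p ≥ 5 and let G be a subgroup of GSp₄(F) (with respect to the antidiagonal symplectic form J) that contains the image of SL₂(F_p) × SL₂(F_p) under the block embedding (A,B) ↦ diag-block matrix sending (A,B) into GSp₄ in the standard 'induced' position, and also contains the permutation matrix σ swapping e₁↔e₂ and e₃↔e₄. Suppose ⟨·,·⟩₀ is a non-degenerate bilinear pairing on F⁴ satisfying ⟨g v₁, g v₂⟩₀ = λ(g)⟨v₁,v₂⟩₀ for all g ∈ G, where λ is the similitude character (trivial on the embedded SL₂×SL₂ and on σ). Then ⟨·,·⟩₀ is alternating and equal to a scalar multiple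 of the standard symplectic pairing given by the matrix J with rows (0,0,0,1),(0,0,1,0),(0,-1,0,0),(-1,0,0,0). -/
/-- The standard antidiagonal symplectic matrix `J` for `GSp₄`. -/
def Jmat (F : Type*) [Field F] : Matrix (Fin 4) (Fin 4) F :=
  !![0, 0, 0, 1; 0, 0, 1, 0; 0, -1, 0, 0; -1, 0, 0, 0]

/-- The block embedding of a pair of `2 × 2` matrices into `4 × 4` matrices, in the
"induced" position: `A` acts on coordinates `(1,4)` and `B` on coordinates `(2,3)`. -/
def blockEmb {F : Type*} [Field F] (A B : Matrix (Fin 2) (Fin 2) F) :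
    Matrix (Fin 4) (Fin 4) F :=
  !![A 0 0, 0, 0, A 0 1;
     0, B 0 0, B 0 1, 0;
     0, B 1 0, B 1 1, 0;
     A 1 0, 0, 0, A 1 1]

/-- The permutation matrix `σ` swapping `e₁ ↔ e₂` and `e₃ ↔ e₄`. -/
def sigmaMat (F : Type*) [Field F] : Matrix (Fin 4) (Fin 4) F :=
  !![0, 1, 0, 0; 1, 0, 0, 0; 0, 0, 0, 1; 0, 0, 1, 0]

/-- The image in `M₄(F)` of an element of `SL₂(𝔽_p) × SL₂(𝔽_p)` under the block embedding,
where entries are transported along `ZMod p → F` (using `char F = p`). -/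
noncomputable def blockEmbSL (p : ℕ) [Fact p.Prime] (F : Type*) [Field F] [CharP F p]
    (A B : Matrix.SpecialLinearGroup (Fin 2) (ZMod p)) : Matrix (Fin 4) (Fin 4) F :=
  blockEmb ((A : Matrix (Fin 2) (Fin 2) (ZMod p)).map (ZMod.castHom (dvd_refl p) F))
    ((B : Matrix (Fin 2) (Fin 2) (ZMod p)).map (ZMod.castHom (dvd_refl p) F))

lemma pairing_trans1 (F : Type*) [Field F] :
    (!![1,0,0,1;0,1,0,0;0,0,1,0;0,0,0,1] : Matrix (Fin 4) (Fin 4) F).transpose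
      = !![1,0,0,0;0,1,0,0;0,0,1,0;1,0,0,1] := by
  ext i j; fin_cases i <;> fin_cases j <;> (try simp [Matrix.transpose_apply]) <;> rfl

lemma pairing_trans2 (F : Type*) [Field F] :
    (!![1,0,0,0;0,1,0,0;0,0,1,0;1,0,0,1] : Matrix (Fin 4) (Fin 4) F).transpose
      = !![1,0,0,1;0,1,0,0;0,0,1,0;0,0,0,1] := by
  ext i j; fin_cases i <;> fin_cases j <;> (try simp [Matrix.transpose_apply]) <;> rfl

lemma pairing_trans3 (F : Type*) [Field F] :
    (!![1,0,0,0;0,1,1,0;0,0,1,0;0,0,0,1] : Matrix (Fin 4) (Fin 4) F).transpose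
      = !![1,0,0,0;0,1,0,0;0,1,1,0;0,0,0,1] := by
  ext i j; fin_cases i <;> fin_cases j <;> (try simp [Matrix.transpose_apply]) <;> rfl

lemma pairing_trans4 (F : Type*) [Field F] :
    (!![1,0,0,0;0,1,0,0;0,1,1,0;0,0,0,1] : Matrix (Fin 4) (Fin 4) F).transpose
      = !![1,0,0,0;0,1,1,0;0,0,1,0;0,0,0,1] := by
  ext i j; fin_cases i <;> fin_cases j <;> (try simp [Matrix.transpose_apply]) <;> rfl

lemma pairing_trans5 (F : Type*) [Field F] :
    (!![0,1,0,0;1,0,0,0;0,0,0,1;0,0,1,0] : Matrix (Fin 4) (Fin 4) F).transpose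
      = !![0,1,0,0;1,0,0,0;0,0,0,1;0,0,1,0] := by
  ext i j; fin_cases i <;> fin_cases j <;> (try simp [Matrix.transpose_apply]) <;> rfl

lemma Jmat_transpose (F : Type*) [Field F] : (Jmat F).transpose = -(Jmat F) := by
  ext i j
  fin_cases i <;> fin_cases j <;>
    first
      | (simp [Jmat, Matrix.transpose_apply, Matrix.neg_apply]; done)
      | exact neg_zero.symm

set_option maxHeartbeats 1000000 in
/-- The key linear algebra: invariance under the four unipotent generators and `σ`
forces the pairing matrix to be a scalar multiple of `J`. -/
lemma pairing_aux (F : Type*) [Field F] (M0 : Matrix (Fin 4) (Fin 4) F)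
    (h1 : (!![1,0,0,0;0,1,0,0;0,0,1,0;1,0,0,1] : Matrix (Fin 4) (Fin 4) F) * M0 *
      !![1,0,0,1;0,1,0,0;0,0,1,0;0,0,0,1] = M0)
    (h2 : (!![1,0,0,1;0,1,0,0;0,0,1,0;0,0,0,1] : Matrix (Fin 4) (Fin 4) F) * M0 *
      !![1,0,0,0;0,1,0,0;0,0,1,0;1,0,0,1] = M0)
    (h3 : (!![1,0,0,0;0,1,0,0;0,1,1,0;0,0,0,1] : Matrix (Fin 4) (Fin 4) F) * M0 *
      !![1,0,0,0;0,1,1,0;0,0,1,0;0,0,0,1] = M0)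
    (h4 : (!![1,0,0,0;0,1,1,0;0,0,1,0;0,0,0,1] : Matrix (Fin 4) (Fin 4) F) * M0 *
      !![1,0,0,0;0,1,0,0;0,1,1,0;0,0,0,1] = M0)
    (h5 : (!![0,1,0,0;1,0,0,0;0,0,0,1;0,0,1,0] : Matrix (Fin 4) (Fin 4) F) * M0 *
      !![0,1,0,0;1,0,0,0;0,0,0,1;0,0,1,0] = M0) :
    M0.transpose = -M0 ∧ ∃ c : F, M0 = c • Jmat F := by
  have e00 : M0 0 0 = 0 := by
    have e := congrFun (congrFun h1 0) 3
    simp only [Matrix.mul_apply, Fin.sum_univ_four, Matrix.cons_val', Matrix.cons_val_zero,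
      Matrix.cons_val_one, Matrix.head_cons, Matrix.empty_val', Matrix.cons_val_fin_one,
      Matrix.cons_val_two, Matrix.cons_val_three, Matrix.tail_cons, Matrix.head_fin_const,
      Matrix.of_apply, one_mul, zero_mul, mul_one, mul_zero, add_zero, zero_add] at e
    linear_combination e
  have e10 : M0 1 0 = 0 := by
    have e := congrFun (congrFun h1 1) 3
    simp only [Matrix.mul_apply, Fin.sum_univ_four, Matrix.cons_val', Matrix.cons_val_zero,
      Matrix.cons_val_one, Matrix.head_cons, Matrix.empty_val', Matrix.cons_val_fin_one,
      Matrix.cons_val_two, Matrix.cons_val_three, Matrix.tail_cons, Matrix.head_fin_const,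
      Matrix.of_apply, one_mul, zero_mul, mul_one, mul_zero, add_zero, zero_add] at e
    linear_combination e
  have e20 : M0 2 0 = 0 := by
    have e := congrFun (congrFun h1 2) 3
    simp only [Matrix.mul_apply, Fin.sum_univ_four, Matrix.cons_val', Matrix.cons_val_zero,
      Matrix.cons_val_one, Matrix.head_cons, Matrix.empty_val', Matrix.cons_val_fin_one,
      Matrix.cons_val_two, Matrix.cons_val_three, Matrix.tail_cons, Matrix.head_fin_const,
      Matrix.of_apply, one_mul, zero_mul, mul_one, mul_zero, add_zero, zero_add] at e
    linear_combination e
  have e01 : M0 0 1 = 0 := by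
    have e := congrFun (congrFun h1 3) 1
    simp only [Matrix.mul_apply, Fin.sum_univ_four, Matrix.cons_val', Matrix.cons_val_zero,
      Matrix.cons_val_one, Matrix.head_cons, Matrix.empty_val', Matrix.cons_val_fin_one,
      Matrix.cons_val_two, Matrix.cons_val_three, Matrix.tail_cons, Matrix.head_fin_const,
      Matrix.of_apply, one_mul, zero_mul, mul_one, mul_zero, add_zero, zero_add] at e
    linear_combination e
  have e02 : M0 0 2 = 0 := by
    have e := congrFun (congrFun h1 3) 2
    simp only [Matrix.mul_apply, Fin.sum_univ_four, Matrix.cons_val', Matrix.cons_val_zero,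
      Matrix.cons_val_one, Matrix.head_cons, Matrix.empty_val', Matrix.cons_val_fin_one,
      Matrix.cons_val_two, Matrix.cons_val_three, Matrix.tail_cons, Matrix.head_fin_const,
      Matrix.of_apply, one_mul, zero_mul, mul_one, mul_zero, add_zero, zero_add] at e
    linear_combination e
  have e33 : M0 3 3 = 0 := by
    have e := congrFun (congrFun h2 3) 0
    simp only [Matrix.mul_apply, Fin.sum_univ_four, Matrix.cons_val', Matrix.cons_val_zero,
      Matrix.cons_val_one, Matrix.head_cons, Matrix.empty_val', Matrix.cons_val_fin_one,
      Matrix.cons_val_two, Matrix.cons_val_three, Matrix.tail_cons, Matrix.head_fin_const,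
      Matrix.of_apply, one_mul, zero_mul, mul_one, mul_zero, add_zero, zero_add] at e
    linear_combination e
  have e13 : M0 1 3 = 0 := by
    have e := congrFun (congrFun h2 1) 0
    simp only [Matrix.mul_apply, Fin.sum_univ_four, Matrix.cons_val', Matrix.cons_val_zero,
      Matrix.cons_val_one, Matrix.head_cons, Matrix.empty_val', Matrix.cons_val_fin_one,
      Matrix.cons_val_two, Matrix.cons_val_three, Matrix.tail_cons, Matrix.head_fin_const,
      Matrix.of_apply, one_mul, zero_mul, mul_one, mul_zero, add_zero, zero_add] at e
    linear_combination e
  have e23 : M0 2 3 = 0 := by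
    have e := congrFun (congrFun h2 2) 0
    simp only [Matrix.mul_apply, Fin.sum_univ_four, Matrix.cons_val', Matrix.cons_val_zero,
      Matrix.cons_val_one, Matrix.head_cons, Matrix.empty_val', Matrix.cons_val_fin_one,
      Matrix.cons_val_two, Matrix.cons_val_three, Matrix.tail_cons, Matrix.head_fin_const,
      Matrix.of_apply, one_mul, zero_mul, mul_one, mul_zero, add_zero, zero_add] at e
    linear_combination e
  have e31 : M0 3 1 = 0 := by
    have e := congrFun (congrFun h2 0) 1
    simp only [Matrix.mul_apply, Fin.sum_univ_four, Matrix.cons_val', Matrix.cons_val_zero,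
      Matrix.cons_val_one, Matrix.head_cons, Matrix.empty_val', Matrix.cons_val_fin_one,
      Matrix.cons_val_two, Matrix.cons_val_three, Matrix.tail_cons, Matrix.head_fin_const,
      Matrix.of_apply, one_mul, zero_mul, mul_one, mul_zero, add_zero, zero_add] at e
    linear_combination e
  have e32 : M0 3 2 = 0 := by
    have e := congrFun (congrFun h2 0) 2
    simp only [Matrix.mul_apply, Fin.sum_univ_four, Matrix.cons_val', Matrix.cons_val_zero,
      Matrix.cons_val_one, Matrix.head_cons, Matrix.empty_val', Matrix.cons_val_fin_one,
      Matrix.cons_val_two, Matrix.cons_val_three, Matrix.tail_cons, Matrix.head_fin_const,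
      Matrix.of_apply, one_mul, zero_mul, mul_one, mul_zero, add_zero, zero_add] at e
    linear_combination e
  have e11 : M0 1 1 = 0 := by
    have e := congrFun (congrFun h3 1) 2
    simp only [Matrix.mul_apply, Fin.sum_univ_four, Matrix.cons_val', Matrix.cons_val_zero,
      Matrix.cons_val_one, Matrix.head_cons, Matrix.empty_val', Matrix.cons_val_fin_one,
      Matrix.cons_val_two, Matrix.cons_val_three, Matrix.tail_cons, Matrix.head_fin_const,
      Matrix.of_apply, one_mul, zero_mul, mul_one, mul_zero, add_zero, zero_add] at e
    linear_combination e
  have e22 : M0 2 2 = 0 := by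
    have e := congrFun (congrFun h4 2) 1
    simp only [Matrix.mul_apply, Fin.sum_univ_four, Matrix.cons_val', Matrix.cons_val_zero,
      Matrix.cons_val_one, Matrix.head_cons, Matrix.empty_val', Matrix.cons_val_fin_one,
      Matrix.cons_val_two, Matrix.cons_val_three, Matrix.tail_cons, Matrix.head_fin_const,
      Matrix.of_apply, one_mul, zero_mul, mul_one, mul_zero, add_zero, zero_add] at e
    linear_combination e
  have s1 : M0 0 3 + M0 3 0 = 0 := by
    have e := congrFun (congrFun h1 3) 3
    simp only [Matrix.mul_apply, Fin.sum_univ_four, Matrix.cons_val', Matrix.cons_val_zero,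
      Matrix.cons_val_one, Matrix.head_cons, Matrix.empty_val', Matrix.cons_val_fin_one,
      Matrix.cons_val_two, Matrix.cons_val_three, Matrix.tail_cons, Matrix.head_fin_const,
      Matrix.of_apply, one_mul, zero_mul, mul_one, mul_zero, add_zero, zero_add] at e
    linear_combination e - e00
  have s2 : M0 1 2 + M0 2 1 = 0 := by
    have e := congrFun (congrFun h3 2) 2
    simp only [Matrix.mul_apply, Fin.sum_univ_four, Matrix.cons_val', Matrix.cons_val_zero,
      Matrix.cons_val_one, Matrix.head_cons, Matrix.empty_val', Matrix.cons_val_fin_one,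
      Matrix.cons_val_two, Matrix.cons_val_three, Matrix.tail_cons, Matrix.head_fin_const,
      Matrix.of_apply, one_mul, zero_mul, mul_one, mul_zero, add_zero, zero_add] at e
    linear_combination e - e11
  have es : M0 1 2 = M0 0 3 := by
    have e := congrFun (congrFun h5 0) 3
    simp only [Matrix.mul_apply, Fin.sum_univ_four, Matrix.cons_val', Matrix.cons_val_zero,
      Matrix.cons_val_one, Matrix.head_cons, Matrix.empty_val', Matrix.cons_val_fin_one,
      Matrix.cons_val_two, Matrix.cons_val_three, Matrix.tail_cons, Matrix.head_fin_const,
      Matrix.of_apply, one_mul, zero_mul, mul_one, mul_zero, add_zero, zero_add] at e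
    linear_combination e
  have v21 : M0 2 1 = -(M0 0 3) := by linear_combination s2 - es
  have v30 : M0 3 0 = -(M0 0 3) := by linear_combination s1
  have hM : M0 = M0 0 3 • Jmat F := by
    have hs : M0 0 3 • Jmat F
        = !![0,0,0,M0 0 3; 0,0,M0 0 3,0; 0,-(M0 0 3),0,0; -(M0 0 3),0,0,0] := by
      simp [Jmat, Matrix.smul_of, Matrix.smul_cons, Matrix.smul_empty]
    rw [hs]
    ext i j
    fin_cases i <;> fin_cases j <;>
      (try simp [e00, e10, e20, e01, e02, e33, e13, e23, e31, e32, e11, e22, es, v21, v30]) <;>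
      rfl
  refine ⟨?_, M0 0 3, hM⟩
  rw [hM, Matrix.transpose_smul, Jmat_transpose, smul_neg]

set_option maxHeartbeats 1000000 in
/-- Let `F` have characteristic `p ≥ 5` and let `G ⊆ M₄(F)` (a set of
similitudes) contain the block embedding of `SL₂(𝔽_p) × SL₂(𝔽_p)` and the swap matrix `σ`,
with the similitude character `lam` trivial on those elements.  Any non-degenerate bilinear
pairing `M0` with `gᵀ M0 g = lam(g) • M0` for all `g ∈ G` is alternating and is a scalar
multiple of the standard symplectic pairing `J`. -/
theorem pairing_eq_scalar_symplectic
    (p : ℕ) [Fact p.Prime] (hp : 5 ≤ p)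
    (F : Type*) [Field F] [CharP F p]
    (M0 : Matrix (Fin 4) (Fin 4) F) (hM0 : IsUnit M0.det)
    (G : Set (Matrix (Fin 4) (Fin 4) F)) (lam : Matrix (Fin 4) (Fin 4) F → Fˣ)
    (hpair : ∀ g ∈ G, g.transpose * M0 * g = (lam g : F) • M0)
    (hSL : ∀ A B : Matrix.SpecialLinearGroup (Fin 2) (ZMod p),
      blockEmbSL p F A B ∈ G ∧ (lam (blockEmbSL p F A B) : F) = 1)
    (hsig : sigmaMat F ∈ G ∧ (lam (sigmaMat F) : F) = 1) :
    M0.transpose = -M0 ∧ ∃ c : F, M0 = c • Jmat F := by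
  set U : Matrix.SpecialLinearGroup (Fin 2) (ZMod p) :=
    ⟨!![1,1;0,1], by simp [Matrix.det_fin_two_of]⟩ with hUdef
  set L : Matrix.SpecialLinearGroup (Fin 2) (ZMod p) :=
    ⟨!![1,0;1,1], by simp [Matrix.det_fin_two_of]⟩ with hLdef
  have hmapU : ((U : Matrix (Fin 2) (Fin 2) (ZMod p)).map (ZMod.castHom (dvd_refl p) F))
      = !![1,1;0,1] := by
    ext i j; fin_cases i <;> fin_cases j <;> simp [hUdef]
  have hmapL : ((L : Matrix (Fin 2) (Fin 2) (ZMod p)).map (ZMod.castHom (dvd_refl p) F))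
      = !![1,0;1,1] := by
    ext i j; fin_cases i <;> fin_cases j <;> simp [hLdef]
  have hmapI : (((1 : Matrix.SpecialLinearGroup (Fin 2) (ZMod p)) :
      Matrix (Fin 2) (Fin 2) (ZMod p)).map (ZMod.castHom (dvd_refl p) F)) = !![1,0;0,1] := by
    ext i j; fin_cases i <;> fin_cases j <;> simp [Matrix.one_apply]
  have hG1 : blockEmbSL p F U 1 = (!![1,0,0,1;0,1,0,0;0,0,1,0;0,0,0,1] :
      Matrix (Fin 4) (Fin 4) F) := by
    rw [blockEmbSL, hmapU, hmapI]
    ext i j; fin_cases i <;> fin_cases j <;> simp [blockEmb]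
  have hG2 : blockEmbSL p F L 1 = (!![1,0,0,0;0,1,0,0;0,0,1,0;1,0,0,1] :
      Matrix (Fin 4) (Fin 4) F) := by
    rw [blockEmbSL, hmapL, hmapI]
    ext i j; fin_cases i <;> fin_cases j <;> simp [blockEmb]
  have hG3 : blockEmbSL p F 1 U = (!![1,0,0,0;0,1,1,0;0,0,1,0;0,0,0,1] :
      Matrix (Fin 4) (Fin 4) F) := by
    rw [blockEmbSL, hmapU, hmapI]
    ext i j; fin_cases i <;> fin_cases j <;> simp [blockEmb]
  have hG4 : blockEmbSL p F 1 L = (!![1,0,0,0;0,1,0,0;0,1,1,0;0,0,0,1] :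
      Matrix (Fin 4) (Fin 4) F) := by
    rw [blockEmbSL, hmapL, hmapI]
    ext i j; fin_cases i <;> fin_cases j <;> simp [blockEmb]
  have h1 : (!![1,0,0,0;0,1,0,0;0,0,1,0;1,0,0,1] : Matrix (Fin 4) (Fin 4) F) * M0 *
      !![1,0,0,1;0,1,0,0;0,0,1,0;0,0,0,1] = M0 := by
    obtain ⟨hmem, hl⟩ := hSL U 1
    have h := hpair _ hmem
    rw [hl, one_smul, hG1, pairing_trans1] at h
    exact h
  have h2 : (!![1,0,0,1;0,1,0,0;0,0,1,0;0,0,0,1] : Matrix (Fin 4) (Fin 4) F) * M0 *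
      !![1,0,0,0;0,1,0,0;0,0,1,0;1,0,0,1] = M0 := by
    obtain ⟨hmem, hl⟩ := hSL L 1
    have h := hpair _ hmem
    rw [hl, one_smul, hG2, pairing_trans2] at h
    exact h
  have h3 : (!![1,0,0,0;0,1,0,0;0,1,1,0;0,0,0,1] : Matrix (Fin 4) (Fin 4) F) * M0 *
      !![1,0,0,0;0,1,1,0;0,0,1,0;0,0,0,1] = M0 := by
    obtain ⟨hmem, hl⟩ := hSL 1 U
    have h := hpair _ hmem
    rw [hl, one_smul, hG3, pairing_trans3] at h
    exact h
  have h4 : (!![1,0,0,0;0,1,1,0;0,0,1,0;0,0,0,1] : Matrix (Fin 4) (Fin 4) F) * M0 *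
      !![1,0,0,0;0,1,0,0;0,1,1,0;0,0,0,1] = M0 := by
    obtain ⟨hmem, hl⟩ := hSL 1 L
    have h := hpair _ hmem
    rw [hl, one_smul, hG4, pairing_trans4] at h
    exact h
  have h5 : (!![0,1,0,0;1,0,0,0;0,0,0,1;0,0,1,0] : Matrix (Fin 4) (Fin 4) F) * M0 *
      !![0,1,0,0;1,0,0,0;0,0,0,1;0,0,1,0] = M0 := by
    obtain ⟨hmem, hl⟩ := hsig
    have h := hpair _ hmem
    rw [hl, one_smul] at h
    rw [show sigmaMat F = !![0,1,0,0;1,0,0,0;0,0,0,1;0,0,1,0] from rfl, pairing_trans5] at h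
    exact h
  exact pairing_aux F M0 h1 h2 h3 h4 h5
end

section
/- Let O′ be the ring of integers in a finite extension of Q_p, let ρ(g_ℓ) ∈ GL₄(O′) be a matrix whose only eigenvalue is 1 and which is not the identity, and suppose there is X ∈ GL₄(O′) with X·ρ(g_ℓ)·X⁻¹ = ρ(g_ℓ)^ℓ. If the Jordan canonical form of ρ(g_ℓ) over an algebraic closure has a Jordan block of size ≥ 3, then the eigenvalues a,b,c,d of X (over an algebraic closure) satisfy, after reordering, a/b = b/c = ℓ; consequently X² has at least three residually distinct eigenvalues provided p ∤ ℓ⁴−1. -/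
open Polynomial

set_option maxHeartbeats 1000000

section Aux
variable {K : Type*} [Field K]

lemma my_charpoly_eval {n : Type*} [DecidableEq n] [Fintype n]
    (M : Matrix n n K) (s : K) :
    M.charpoly.eval s = (Matrix.scalar n s - M).det := by
  rw [Matrix.charpoly, eval_det, Matrix.matPolyEquiv_charmatrix]
  simp

lemma my_isRoot_charpoly {n : Type*} [DecidableEq n] [Fintype n]
    (M : Matrix n n K) (s : K) (z : n → K) (hz : z ≠ 0)
    (h : M.mulVec z = s • z) : M.charpoly.IsRoot s := by
  have h0 : (M - Matrix.scalar n s).mulVec z = 0 := by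
    rw [Matrix.sub_mulVec]
    have hs : (Matrix.scalar n s).mulVec z = s • z := by
      ext i; simp [Matrix.scalar_apply, Matrix.mulVec_diagonal]
    rw [h, hs, sub_self]
  have hdet : (M - Matrix.scalar n s).det = 0 :=
    (Matrix.exists_mulVec_eq_zero_iff).mp ⟨z, hz, h0⟩
  have : Matrix.scalar n s - M = -(M - Matrix.scalar n s) := (neg_sub _ _).symm
  rw [IsRoot, my_charpoly_eval, this, Matrix.det_neg, hdet, mul_zero]

lemma my_exists_eigenvector_of_almost {V : Type*} [AddCommGroup V] [Module K V]
    [FiniteDimensional K V]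
    (f : Module.End K V) (F : Submodule K V) (hstab : ∀ x ∈ F, f x ∈ F)
    (t : K) (v : V) (hv : v ∉ F) (hq : f v - t • v ∈ F) :
    ∃ z : V, z ≠ 0 ∧ f z = t • z := by
  have hstab' : ∀ x ∈ F, (f - t • (1 : Module.End K V)) x ∈ F := fun x hx => by
    simpa using F.sub_mem (hstab x hx) (F.smul_mem t hx)
  set g : F →ₗ[K] F := (f - t • (1 : Module.End K V)).restrict hstab' with hg
  by_cases hinj : Function.Injective g
  · obtain ⟨e, he⟩ := (LinearMap.injective_iff_surjective.mp hinj)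
      ⟨-(f v - t • v), F.neg_mem hq⟩
    have he' : f (e : V) - t • (e : V) = -(f v - t • v) := by
      have := congrArg (Subtype.val) he
      simpa [hg, LinearMap.restrict_apply] using this
    refine ⟨v + e, ?_, ?_⟩
    · intro h0
      apply hv
      have : v = -(e : V) := by
        have := congrArg (fun w => w - (e : V)) h0
        simpa [add_sub_cancel_right] using this
      rw [this]; exact F.neg_mem e.2
    · have : f (v + e) - t • (v + e) = 0 := by
        rw [map_add, smul_add]
        have : f v + f e - (t • v + t • e) = (f v - t • v) + (f e - t • e) := by abel
        rw [this, he', add_neg_cancel]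
      rw [← sub_eq_zero]; exact this
  · rw [← LinearMap.ker_eq_bot] at hinj
    obtain ⟨z, hzmem, hz0⟩ := Submodule.ne_bot_iff _ |>.mp hinj
    have : (f - t • (1 : Module.End K V)) (z : V) = 0 := by
      have := congrArg (Subtype.val) (LinearMap.mem_ker.mp hzmem)
      simpa [hg, LinearMap.restrict_apply] using this
    refine ⟨z, by simpa using hz0, ?_⟩
    have : f (z : V) - t • (z : V) = 0 := by simpa using this
    rw [← sub_eq_zero]; exact this

end Aux

/-- Let `ρ(g_ℓ)` be a `4 × 4` matrix (over an algebraically closed field `K`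
of characteristic zero, the algebraic closure of the fraction field of `O′`) whose only
eigenvalue is `1` and which is not the identity, with `X ρ(g_ℓ) X⁻¹ = ρ(g_ℓ)^ℓ` for an
invertible `X`.  If the Jordan form of `ρ(g_ℓ)` has a block of size `≥ 3` (i.e.
`(ρ(g_ℓ) − 1)² ≠ 0`), then the eigenvalues `a, b, c, d` of `X` satisfy, after reordering,
`a/b = b/c = ℓ`; consequently the eigenvalues `a², b², c²` of `X²` are residually pairwise
distinct (with respect to any residue map to a field of characteristic `p`, on which they are
nonzero), provided `p ∤ ℓ⁴ − 1`. -/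
theorem frobenius_eigenvalue_ratios_of_large_jordan_block
    (p ℓ : ℕ) [Fact p.Prime] (hℓ : ℓ.Prime) (hℓp : ℓ ≠ p) (hpl : ¬ (p ∣ ℓ ^ 4 - 1))
    (K : Type*) [Field K] [IsAlgClosed K] [CharZero K]
    (ρ X : Matrix (Fin 4) (Fin 4) K)
    (hchar : ρ.charpoly = (Polynomial.X - 1) ^ 4)
    (hne : ρ ≠ 1)
    (hJordan : (ρ - 1) ^ 2 ≠ 0)
    (hX : IsUnit X.det)
    (hrel : X * ρ = ρ ^ ℓ * X) :
    ∃ a b c d : K,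
      X.charpoly = (Polynomial.X - C a) * (Polynomial.X - C b) *
        (Polynomial.X - C c) * (Polynomial.X - C d) ∧
      a = (ℓ : K) * b ∧ b = (ℓ : K) * c ∧
      ∀ (A : Subring K) (k : Type) (_ : Field k) (_ : CharP k p) (ψ : A →+* k)
        (ha : a ^ 2 ∈ A) (hb : b ^ 2 ∈ A) (hc : c ^ 2 ∈ A),
        ψ ⟨a ^ 2, ha⟩ ≠ 0 → ψ ⟨b ^ 2, hb⟩ ≠ 0 → ψ ⟨c ^ 2, hc⟩ ≠ 0 →
          ψ ⟨a ^ 2, ha⟩ ≠ ψ ⟨b ^ 2, hb⟩ ∧ ψ ⟨a ^ 2, ha⟩ ≠ ψ ⟨c ^ 2, hc⟩ ∧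
            ψ ⟨b ^ 2, hb⟩ ≠ ψ ⟨c ^ 2, hc⟩ := by
  classical
  have hl2 : 2 ≤ ℓ := hℓ.two_le
  set N : Matrix (Fin 4) (Fin 4) K := ρ - 1 with hNdef
  have hN4 : N ^ 4 = 0 := by
    have h := Matrix.aeval_self_charpoly ρ
    rw [hchar] at h
    simpa [map_pow, map_sub] using h
  have hNpow : ∀ m, 4 ≤ m → N ^ m = 0 := by
    intro m hm
    obtain ⟨k, rfl⟩ := Nat.exists_eq_add_of_le hm
    rw [pow_add, hN4, zero_mul]
  -- binomial expansion
  have hrho : ρ = N + 1 := by rw [hNdef, sub_add_cancel]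
  have hexp1 : ρ ^ ℓ = ∑ m ∈ Finset.range (ℓ + 1),
      N ^ m * (ℓ.choose m : Matrix (Fin 4) (Fin 4) K) := by
    rw [hrho, Commute.add_pow (Commute.one_right N)]
    simp
  have hexp2 : ρ ^ ℓ = ∑ m ∈ Finset.range 4,
      N ^ m * (ℓ.choose m : Matrix (Fin 4) (Fin 4) K) := by
    rw [hexp1]
    rw [Finset.sum_subset (Finset.range_subset_range.mpr (by omega : ℓ + 1 ≤ ℓ + 4))
      (fun x _ hx => by
        rw [Nat.choose_eq_zero_of_lt (by simpa using hx), Nat.cast_zero, mul_zero])]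
    rw [Finset.sum_subset (Finset.range_subset_range.mpr (by omega : 4 ≤ ℓ + 4))
      (fun x _ hx => by
        rw [hNpow x (by simpa using hx), zero_mul])]
  set c2 : Matrix (Fin 4) (Fin 4) K := (ℓ.choose 2 : Matrix (Fin 4) (Fin 4) K) with hc2
  set c3 : Matrix (Fin 4) (Fin 4) K := (ℓ.choose 3 : Matrix (Fin 4) (Fin 4) K) with hc3
  set U : Matrix (Fin 4) (Fin 4) K :=
    (ℓ : Matrix (Fin 4) (Fin 4) K) + c2 * N + c3 * N ^ 2 with hUdef
  have hU : ρ ^ ℓ = 1 + U * N := by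
    rw [hexp2, Finset.sum_range_succ, Finset.sum_range_succ, Finset.sum_range_succ,
      Finset.sum_range_one, hUdef]
    rw [Nat.choose_zero_right, Nat.choose_one_right, Nat.cast_one]
    rw [pow_zero, pow_one, mul_one, add_mul, add_mul]
    rw [mul_assoc c2 N N, ← pow_two, mul_assoc c3 (N ^ 2) N, ← pow_succ]
    rw [← (Nat.cast_commute ℓ N).eq, hc2, ← (Nat.cast_commute (ℓ.choose 2) (N ^ 2)).eq,
      hc3, ← (Nat.cast_commute (ℓ.choose 3) (N ^ 3)).eq]
    rw [show (2:ℕ) + 1 = 3 from rfl]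
    abel
  -- the intertwining relation
  have hXN : X * N = U * (N * X) := by
    have h1 : X * (N + 1) = (1 + U * N) * X := by rw [← hrho, ← hU]; exact hrel
    rw [mul_add, mul_one, add_mul, one_mul] at h1
    rw [add_comm] at h1
    exact (add_left_cancel h1).trans (mul_assoc U N X)
  -- U is a unit
  have hUcommN : Commute U N := by
    rw [hUdef]
    refine Commute.add_left (Commute.add_left (Nat.cast_commute ℓ N) ?_) ?_
    · exact Commute.mul_left ((Nat.cast_commute (ℓ.choose 2) N)) (Commute.refl N)
    · exact Commute.mul_left ((Nat.cast_commute (ℓ.choose 3) N)) ((Commute.refl N).pow_left 2)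
  have hUunit : IsUnit U := by
    have hcast : ((ℓ : ℕ) : Matrix (Fin 4) (Fin 4) K)
        = algebraMap K (Matrix (Fin 4) (Fin 4) K) (ℓ : K) := by
      rw [map_natCast]
    have hℓunit : IsUnit ((ℓ : ℕ) : Matrix (Fin 4) (Fin 4) K) := by
      rw [hcast]
      exact (isUnit_iff_ne_zero.mpr (Nat.cast_ne_zero.mpr (by omega) :
        ((ℓ:ℕ):K) ≠ 0)).map (algebraMap K (Matrix (Fin 4) (Fin 4) K))
    have hBcomm : Commute N (c2 + c3 * N) := by
      refine Commute.add_right ?_ ?_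
      · exact (Nat.cast_commute (ℓ.choose 2) N).symm
      · exact Commute.mul_right ((Nat.cast_commute (ℓ.choose 3) N).symm) rfl
    have hnil : IsNilpotent (c2 * N + c3 * N ^ 2) := by
      refine ⟨4, ?_⟩
      have hform : c2 * N + c3 * N ^ 2 = N * (c2 + c3 * N) := by
        rw [mul_add, ← (Nat.cast_commute (ℓ.choose 2) N).eq]
        rw [← mul_assoc, ← (Nat.cast_commute (ℓ.choose 3) N).eq, mul_assoc, ← pow_two]
      rw [hform, hBcomm.mul_pow, hN4, zero_mul]
    have hUeq : U = (ℓ : Matrix (Fin 4) (Fin 4) K) + (c2 * N + c3 * N ^ 2) := by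
      rw [hUdef]; abel
    rw [hUeq]
    exact IsNilpotent.isUnit_add_left_of_commute hnil hℓunit
      (Commute.add_left ((Nat.cast_commute ℓ (c2 * N)).symm)
        ((Nat.cast_commute ℓ (c3 * N ^ 2)).symm))
  -- pass to endomorphisms
  set f : Module.End K (Fin 4 → K) := Matrix.toLinAlgEquiv' X with hfdef
  set nn : Module.End K (Fin 4 → K) := Matrix.toLinAlgEquiv' N with hnndef
  set u : Module.End K (Fin 4 → K) := Matrix.toLinAlgEquiv' U with hudef
  have hn4 : nn ^ 4 = 0 := by rw [hnndef, ← map_pow, hN4, map_zero]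
  have hn2 : nn ^ 2 ≠ 0 := by
    intro h
    apply hJordan
    apply Matrix.toLinAlgEquiv'.injective
    rw [map_pow, map_zero]
    exact h
  have hfm : f * nn = u * (nn * f) := by
    have := congrArg (Matrix.toLinAlgEquiv' (R := K) (n := Fin 4)) hXN
    simpa [map_mul] using this
  have hcomm : Commute nn u := by
    have := congrArg (Matrix.toLinAlgEquiv' (R := K) (n := Fin 4)) hUcommN.eq
    simp only [map_mul] at this
    exact this.symm
  have huunit : IsUnit u := hUunit.map Matrix.toLinAlgEquiv'
  have hkey : ∀ i : ℕ, f * nn ^ i = u ^ i * (nn ^ i * f) := by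
    intro i
    induction i with
    | zero => simp
    | succ i ih =>
      have hc : Commute nn (u ^ i) := hcomm.pow_right i
      rw [pow_succ' nn i, ← mul_assoc, hfm, mul_assoc, mul_assoc, ih]
      rw [← mul_assoc nn (u ^ i) _, hc.eq, mul_assoc (u ^ i) nn _,
        ← mul_assoc u (u ^ i) _, ← pow_succ' u i, ← mul_assoc nn (nn ^ i) f,
        ← pow_succ' nn i]
  have hstab : ∀ (i : ℕ) (x : Fin 4 → K), (nn ^ i) x = 0 → (nn ^ i) (f x) = 0 := by
    intro i x hx
    have happ := congrArg (fun g : Module.End K (Fin 4 → K) => g x) (hkey i)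
    simp only [Module.End.mul_apply] at happ
    rw [hx, map_zero] at happ
    have hbij := (Module.End.isUnit_iff (u ^ i)).mp (huunit.pow i)
    exact hbij.injective (by rw [← happ, map_zero])
  -- strictness of the kernel filtration
  have hne23 : ∃ x : Fin 4 → K, (nn ^ 3) x = 0 ∧ (nn ^ 2) x ≠ 0 := by
    by_contra hcon
    push_neg at hcon
    apply hn2
    apply LinearMap.ext
    intro x
    have h1 : (nn ^ 3) (nn x) = 0 := by
      have h4 : (nn ^ 4) x = (nn ^ 3) (nn x) := by
        rw [pow_succ nn 3]; exact Module.End.mul_apply _ _ _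
      rw [← h4, hn4]; rfl
    have h3 : (nn ^ 3) x = 0 := by
      have h5 : (nn ^ 3) x = (nn ^ 2) (nn x) := by
        rw [pow_succ nn 2]; exact Module.End.mul_apply _ _ _
      rw [h5]
      exact hcon _ h1
    simpa using hcon x h3
  obtain ⟨w3, hw3a, hw3b⟩ := hne23
  -- eigenvector on the quotient ker nn³ / ker nn²
  set F1 : Submodule K (Fin 4 → K) := LinearMap.ker nn with hF1
  set F2 : Submodule K (Fin 4 → K) := LinearMap.ker (nn ^ 2) with hF2
  set F3 : Submodule K (Fin 4 → K) := LinearMap.ker (nn ^ 3) with hF3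
  have hstabF3 : ∀ x ∈ F3, f x ∈ F3 := fun x hx =>
    LinearMap.mem_ker.mpr (hstab 3 x (LinearMap.mem_ker.mp hx))
  set g0 : F3 →ₗ[K] F3 := f.restrict hstabF3 with hg0def
  set F2' : Submodule K F3 := F2.comap F3.subtype with hF2'
  have hcoe : ∀ x : F3, (g0 x : Fin 4 → K) = f (x : Fin 4 → K) := fun x => rfl
  have hg0 : F2' ≤ F2'.comap g0 := by
    intro x hx
    have hx2 : (nn ^ 2) (x : Fin 4 → K) = 0 :=
      LinearMap.mem_ker.mp (Submodule.mem_comap.mp hx)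
    refine Submodule.mem_comap.mpr (Submodule.mem_comap.mpr ?_)
    rw [Submodule.coe_subtype, hcoe x]
    exact LinearMap.mem_ker.mpr (hstab 2 _ hx2)
  set gbar : (F3 ⧸ F2') →ₗ[K] (F3 ⧸ F2') := Submodule.mapQ F2' F2' g0 hg0 with hgbar
  have hnt : Nontrivial (F3 ⧸ F2') := by
    refine Submodule.Quotient.nontrivial_iff.mpr (lt_top_iff_ne_top.mp ?_)
    refine lt_of_le_of_ne le_top ?_
    intro htop
    have hmem : (⟨w3, LinearMap.mem_ker.mpr hw3a⟩ : F3) ∈ F2' := htop ▸ Submodule.mem_top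
    exact hw3b (LinearMap.mem_ker.mp (Submodule.mem_comap.mp hmem))
  obtain ⟨t, ht⟩ := Module.End.exists_eigenvalue (gbar : Module.End K (F3 ⧸ F2'))
  obtain ⟨q, hq⟩ := ht.exists_hasEigenvector
  obtain ⟨w, rfl⟩ := Submodule.Quotient.mk_surjective F2' q
  have heig := Module.End.mem_eigenspace_iff.mp hq.1
  have hin : g0 w - t • w ∈ F2' := by
    have h1 : gbar (Submodule.Quotient.mk w) = Submodule.Quotient.mk (g0 w) := by
      rw [hgbar]; exact Submodule.mapQ_apply _ _ _ _
    have h2 : Submodule.Quotient.mk (p := F2') (g0 w) = Submodule.Quotient.mk (t • w) := by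
      rw [← h1, heig]
      exact (Submodule.Quotient.mk_smul F2' t w).symm
    exact (Submodule.Quotient.eq F2').mp h2
  set v3 : Fin 4 → K := (w : Fin 4 → K) with hv3def
  have hv3F3 : (nn ^ 3) v3 = 0 := LinearMap.mem_ker.mp w.2
  have hv3nF2 : (nn ^ 2) v3 ≠ 0 := by
    intro h
    exact hq.2 ((Submodule.Quotient.mk_eq_zero _).mpr
      (Submodule.mem_comap.mpr (LinearMap.mem_ker.mpr h)))
  have hquasi3 : (nn ^ 2) (f v3 - t • v3) = 0 := by
    have hmem := Submodule.mem_comap.mp hin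
    have hc : ((g0 w - t • w : F3) : Fin 4 → K) = f v3 - t • v3 := by
      simp [hg0def, LinearMap.restrict_apply, hv3def]
    rw [← hc]
    exact LinearMap.mem_ker.mp hmem
  -- structure of u as an operator
  have hu_end : u = (ℓ : Module.End K (Fin 4 → K))
      + (ℓ.choose 2 : Module.End K (Fin 4 → K)) * nn
      + (ℓ.choose 3 : Module.End K (Fin 4 → K)) * nn ^ 2 := by
    rw [hudef, hUdef, hc2, hc3]
    simp [map_add, map_mul, map_pow, map_natCast, hnndef]
  have hu_apply : ∀ y : Fin 4 → K, u y = (ℓ : K) • y + (ℓ.choose 2 : K) • nn y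
      + (ℓ.choose 3 : K) • (nn ^ 2) y := by
    intro y
    rw [hu_end]
    simp only [LinearMap.add_apply, Module.End.mul_apply, Module.End.natCast_apply]
    rw [Nat.cast_smul_eq_nsmul K, Nat.cast_smul_eq_nsmul K, Nat.cast_smul_eq_nsmul K]
  have hpow2 : ∀ x : Fin 4 → K, (nn ^ 2) x = nn (nn x) := fun x => by
    rw [pow_two]; exact Module.End.mul_apply _ _ _
  have hpow3 : ∀ x : Fin 4 → K, (nn ^ 3) x = nn ((nn ^ 2) x) := fun x => by
    rw [pow_succ' nn 2]; exact Module.End.mul_apply _ _ _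
  have happly : ∀ x : Fin 4 → K, f (nn x) = u (nn (f x)) := by
    intro x
    have := congrArg (fun g : Module.End K (Fin 4 → K) => g x) hfm
    simpa [Module.End.mul_apply] using this
  have hcommapp : ∀ x : Fin 4 → K, nn (u x) = u (nn x) := by
    intro x
    have := congrArg (fun g : Module.End K (Fin 4 → K) => g x) hcomm.eq
    simpa [Module.End.mul_apply] using this
  set v2 : Fin 4 → K := nn v3 with hv2def
  set v1 : Fin 4 → K := nn v2 with hv1def
  have h21 : (nn ^ 2) v3 = v1 := by rw [hpow2, hv1def, hv2def]
  have hnnv1 : nn v1 = 0 := by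
    rw [← h21, ← hpow3, hv3F3]
  have hv1ne : v1 ≠ 0 := fun h => hv3nF2 (by rw [h21, h])
  set k3 : Fin 4 → K := f v3 - t • v3 with hk3def
  have hfv3 : f v3 = t • v3 + k3 := by rw [hk3def]; abel
  -- computing f v2
  have hfv2 : f v2 = ((ℓ : K) * t) • v2 + ((t * (ℓ.choose 2 : K)) • v1 + u (nn k3)) := by
    have h1 : f v2 = u (nn (f v3)) := happly v3
    rw [hfv3, map_add, map_smul, map_add, map_smul] at h1
    rw [hu_apply (nn v3)] at h1
    rw [hpow2 (nn v3)] at h1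
    rw [show nn (nn v3) = v1 from (hpow2 v3).symm.trans h21] at h1
    rw [hnnv1, smul_zero, add_zero] at h1
    rw [h1]
    module
  set k2 : Fin 4 → K := f v2 - ((ℓ : K) * t) • v2 with hk2def
  have hfv2' : f v2 = ((ℓ : K) * t) • v2 + k2 := by rw [hk2def]; abel
  have hk2mem : nn k2 = 0 := by
    rw [hk2def, hfv2, add_sub_cancel_left, map_add, map_smul, hnnv1, smul_zero, zero_add]
    rw [hcommapp (nn k3), ← hpow2 k3, hquasi3, map_zero]
  have hfv1 : f v1 = ((ℓ : K) * ((ℓ : K) * t)) • v1 := by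
    have h1 : f v1 = u (nn (f v2)) := happly v2
    rw [hfv2', map_add, map_smul, hk2mem, add_zero, ← hv1def] at h1
    rw [map_smul, hu_apply v1, hpow2 v1, hnnv1, map_zero, smul_zero, smul_zero,
      add_zero, add_zero] at h1
    rw [h1]
    module
  have hv2ne : nn v2 ≠ 0 := fun h => hv1ne (by rw [hv1def, h])
  have hstab1 : ∀ x ∈ LinearMap.ker nn, f x ∈ LinearMap.ker nn := by
    intro x hx
    rw [LinearMap.mem_ker] at hx ⊢
    have h := hstab 1 x (by rwa [pow_one])
    rwa [pow_one] at h
  obtain ⟨zb, hzb0, hzbf⟩ := my_exists_eigenvector_of_almost f (LinearMap.ker nn) hstab1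
    ((ℓ : K) * t) v2 (fun h => hv2ne (LinearMap.mem_ker.mp h)) (LinearMap.mem_ker.mpr hk2mem)
  have hstab2 : ∀ x ∈ LinearMap.ker (nn ^ 2), f x ∈ LinearMap.ker (nn ^ 2) := by
    intro x hx
    rw [LinearMap.mem_ker] at hx ⊢
    exact hstab 2 x hx
  obtain ⟨zc, hzc0, hzcf⟩ := my_exists_eigenvector_of_almost f (LinearMap.ker (nn ^ 2)) hstab2
    t v3 (fun h => hv3nF2 (LinearMap.mem_ker.mp h)) (LinearMap.mem_ker.mpr hquasi3)
  have hmulvec : ∀ z : Fin 4 → K, f z = X.mulVec z := fun z => by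
    rw [hfdef]; exact Matrix.toLinAlgEquiv'_apply X z
  have hroot : ∀ (s : K) (z : Fin 4 → K), z ≠ 0 → f z = s • z → X.charpoly.IsRoot s :=
    fun s z h0 hz => my_isRoot_charpoly X s z h0 ((hmulvec z).symm.trans hz)
  have hroot_c : X.charpoly.IsRoot t := hroot t zc hzc0 hzcf
  have hroot_b : X.charpoly.IsRoot ((ℓ : K) * t) := hroot _ zb hzb0 hzbf
  have hroot_a : X.charpoly.IsRoot ((ℓ : K) * ((ℓ : K) * t)) := hroot _ v1 hv1ne hfv1
  have ht0 : t ≠ 0 := by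
    intro h
    have hz : X.mulVec zc = 0 := (hmulvec zc).symm.trans (by rw [hzcf, h, zero_smul])
    exact hX.ne_zero (Matrix.exists_mulVec_eq_zero_iff.mp ⟨zc, hzc0, hz⟩)
  have hlK0 : (ℓ : K) ≠ 0 := Nat.cast_ne_zero.mpr (by omega)
  have hlK1 : (ℓ : K) ≠ 1 := by
    intro h
    have h1 : ((ℓ : ℕ) : K) = ((1 : ℕ) : K) := by rw [h, Nat.cast_one]
    have := Nat.cast_injective h1
    omega
  have hlK2 : (ℓ : K) * (ℓ : K) ≠ 1 := by
    intro h
    have h1 : ((ℓ * ℓ : ℕ) : K) = ((1 : ℕ) : K) := by push_cast; rw [h]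
    have h2 := Nat.cast_injective h1
    have h3 : 4 ≤ ℓ * ℓ := Nat.mul_le_mul hl2 hl2
    omega
  -- polynomial endgame
  have hPm : X.charpoly.Monic := X.charpoly_monic
  have hP4 : X.charpoly.natDegree = 4 := by
    rw [Matrix.charpoly_natDegree_eq_dim, Fintype.card_fin]
  have hbc : (ℓ : K) * t ≠ t := by
    intro h
    have h' : (ℓ : K) * t = 1 * t := by rw [one_mul]; exact h
    exact hlK1 (mul_right_cancel₀ ht0 h')
  have hab : (ℓ : K) * ((ℓ : K) * t) ≠ (ℓ : K) * t := by
    intro h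
    have h' : (ℓ : K) * ((ℓ : K) * t) = 1 * ((ℓ : K) * t) := by rw [one_mul]; exact h
    exact hlK1 (mul_right_cancel₀ (mul_ne_zero hlK0 ht0) h')
  have hac : (ℓ : K) * ((ℓ : K) * t) ≠ t := by
    intro h
    have h' : ((ℓ : K) * (ℓ : K)) * t = 1 * t := by rw [mul_assoc, one_mul]; exact h
    exact hlK2 (mul_right_cancel₀ ht0 h')
  obtain ⟨P1, hP1⟩ := (dvd_iff_isRoot.mpr hroot_c : (Polynomial.X - C t) ∣ X.charpoly)
  have hP1m : P1.Monic := (monic_X_sub_C t).of_mul_monic_left (hP1 ▸ hPm)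
  have hroot_b1 : P1.IsRoot ((ℓ : K) * t) := by
    have h := hroot_b
    rw [hP1] at h
    simp only [IsRoot, eval_mul, eval_sub, eval_X, eval_C] at h ⊢
    rcases mul_eq_zero.mp h with h' | h'
    · exact absurd (sub_eq_zero.mp h') hbc
    · exact h'
  obtain ⟨P2, hP2⟩ := dvd_iff_isRoot.mpr hroot_b1
  have hP2m : P2.Monic := (monic_X_sub_C _).of_mul_monic_left (hP2 ▸ hP1m)
  have hroot_a2 : P2.IsRoot ((ℓ : K) * ((ℓ : K) * t)) := by
    have h := hroot_a
    rw [hP1, hP2] at h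
    simp only [IsRoot, eval_mul, eval_sub, eval_X, eval_C] at h ⊢
    rcases mul_eq_zero.mp h with h' | h'
    · exact absurd (sub_eq_zero.mp h') hac
    · rcases mul_eq_zero.mp h' with h'' | h''
      · exact absurd (sub_eq_zero.mp h'') hab
      · exact h''
  obtain ⟨P3, hP3⟩ := dvd_iff_isRoot.mpr hroot_a2
  have hP3m : P3.Monic := (monic_X_sub_C _).of_mul_monic_left (hP3 ▸ hP2m)
  have e1 : X.charpoly = (Polynomial.X - C t) * ((Polynomial.X - C ((ℓ : K) * t)) *
      ((Polynomial.X - C ((ℓ : K) * ((ℓ : K) * t))) * P3)) := by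
    rw [hP1, hP2, hP3]
  have hm3 : ((Polynomial.X - C ((ℓ : K) * ((ℓ : K) * t))) * P3).Monic :=
    (monic_X_sub_C _).mul hP3m
  have hm2 : ((Polynomial.X - C ((ℓ : K) * t)) *
      ((Polynomial.X - C ((ℓ : K) * ((ℓ : K) * t))) * P3)).Monic :=
    (monic_X_sub_C _).mul hm3
  have hdeg : P3.natDegree = 1 := by
    have h4 := hP4
    rw [e1, (monic_X_sub_C t).natDegree_mul hm2, (monic_X_sub_C _).natDegree_mul hm3,
      (monic_X_sub_C _).natDegree_mul hP3m] at h4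
    simp only [natDegree_X_sub_C] at h4
    omega
  obtain ⟨e0, hP3eq⟩ : ∃ e0, P3 = Polynomial.X + C e0 :=
    ⟨P3.coeff 0, hP3m.eq_X_add_C hdeg⟩
  refine ⟨(ℓ : K) * ((ℓ : K) * t), (ℓ : K) * t, t, -e0, ?_, rfl, rfl, ?_⟩
  · rw [e1, hP3eq, map_neg, sub_neg_eq_add]
    ring
  · -- residual distinctness
    intro A k instF instC ψ ha hb hcm h1 h2 h3
    letI := instF
    letI := instC
    have hψ : ∀ (x y : K) (hx : x ∈ A) (hy : y ∈ A) (m : ℕ), x = (m : K) * y →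
        ψ ⟨x, hx⟩ = (m : k) * ψ ⟨y, hy⟩ := by
      intro x y hx hy m hxy
      have hsub : (⟨x, hx⟩ : A) = (m : A) * ⟨y, hy⟩ := by
        apply Subtype.ext
        push_cast
        exact hxy
      rw [hsub, map_mul, map_natCast]
    have h1le2 : 1 ≤ ℓ ^ 2 := Nat.one_le_pow _ _ (by omega)
    have h1le4 : 1 ≤ ℓ ^ 4 := Nat.one_le_pow _ _ (by omega)
    have hdvd24 : (ℓ ^ 2 - 1) ∣ (ℓ ^ 4 - 1) := ⟨ℓ ^ 2 + 1, by zify [h1le2, h1le4]; ring⟩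
    have hkey : ∀ (x y : K) (hx : x ∈ A) (hy : y ∈ A) (j : ℕ),
        (ℓ ^ j - 1) ∣ (ℓ ^ 4 - 1) → 1 ≤ ℓ ^ j → x = ((ℓ ^ j : ℕ) : K) * y →
        ψ ⟨y, hy⟩ ≠ 0 → ψ ⟨x, hx⟩ ≠ ψ ⟨y, hy⟩ := by
      intro x y hx hy j hjd hj1 hxy hy0 heq
      rw [hψ x y hx hy (ℓ ^ j) hxy] at heq
      have heq' : ((ℓ ^ j : ℕ) : k) * ψ ⟨y, hy⟩ = 1 * ψ ⟨y, hy⟩ := by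
        rw [one_mul]; exact heq
      have hone : ((ℓ ^ j : ℕ) : k) = 1 := mul_right_cancel₀ hy0 heq'
      have hzero : ((ℓ ^ j - 1 : ℕ) : k) = 0 := by
        rw [Nat.cast_sub hj1, hone, Nat.cast_one, sub_self]
      exact hpl (((CharP.cast_eq_zero_iff k p _).mp hzero).trans hjd)
    refine ⟨hkey _ _ ha hb 2 hdvd24 h1le2 (by push_cast; ring) h2,
      hkey _ _ ha hcm 4 dvd_rfl h1le4 (by push_cast; ring) h3,
      hkey _ _ hb hcm 2 hdvd24 h1le2 (by push_cast; ring) h3⟩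
end
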